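/- Let p₁ and p₂ be distinct primes and let k be a positive integer. Suppose A ⊆ ℤ_{p₂} is a measurable set with μ_{p₂}(A) > 0. Then for every ε > 0 there exists c = c(ε) > 0 such that the set {α ∈ ℤ_{p₂} : α = α' + z for some α' ∈ A and some z ∈ ℤ with p₁^k ∣ z and |z| < c} has μ_{p₂}-measure at least 1 − ε. -/

import Mathlib

open MeasureTheory ENNReal
open scoped NNReal

noncomputable instance (p : ℕ) [Fact p.Prime] : MeasurableSpace ℤ_[p] := borel _
instance (p : ℕ) [Fact p.Prime] : BorelSpace ℤ_[p] := ⟨rfl⟩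

/-- The Haar probability measure on the compact additive group `ℤ_[p]`. -/
noncomputable def muP (p : ℕ) [Fact p.Prime] : Measure ℤ_[p] :=
  Measure.addHaarMeasure ⊤

namespace Stmt16

variable {p : ℕ} [Fact p.Prime]

instance : (muP p).IsAddLeftInvariant := by unfold muP; infer_instance
instance : (muP p).Regular := by unfold muP; infer_instance

lemma muP_univ : muP p Set.univ = 1 := by
  rw [muP, ← TopologicalSpace.PositiveCompacts.coe_top (α := ℤ_[p])]
  exact Measure.addHaarMeasure_self

/-- The closed ball of radius `p^(-n)` around `x`. -/
noncomputable def pball (n : ℕ) (x : ℤ_[p]) : Set ℤ_[p] :=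
  Metric.closedBall x ((p : ℝ) ^ (-(n : ℤ)))

lemma mem_pball {n : ℕ} {x y : ℤ_[p]} : y ∈ pball n x ↔ ‖y - x‖ ≤ (p : ℝ) ^ (-(n : ℤ)) := by
  simp [pball, Metric.mem_closedBall, dist_eq_norm]

lemma measurableSet_pball (n : ℕ) (x : ℤ_[p]) : MeasurableSet (pball n x) :=
  measurableSet_closedBall

lemma mem_pball_self (n : ℕ) (x : ℤ_[p]) : x ∈ pball n x := by
  rw [mem_pball]
  simp only [sub_self, norm_zero]
  positivity

lemma norm_sub_trans (a b c : ℤ_[p]) : ‖a - c‖ ≤ max ‖a - b‖ ‖b - c‖ := by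
  have h : a - c = (a - b) + (b - c) := by ring
  rw [h]; exact PadicInt.nonarchimedean _ _

lemma pball_eq_of_mem {n : ℕ} {x y : ℤ_[p]} (h : y ∈ pball n x) : pball n y = pball n x := by
  rw [mem_pball] at h
  ext w
  simp only [mem_pball]
  constructor <;> intro hw
  · exact (norm_sub_trans w y x).trans (max_le hw h)
  · refine (norm_sub_trans w x y).trans (max_le hw ?_)
    rwa [norm_sub_rev]

lemma pball_mono {m n : ℕ} (h : m ≤ n) (x : ℤ_[p]) : pball n x ⊆ pball m x := by
  apply Metric.closedBall_subset_closedBall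
  apply zpow_le_zpow_right₀
  · exact_mod_cast (Fact.out : p.Prime).one_lt.le
  · omega

lemma muP_pball_eq (n : ℕ) (x y : ℤ_[p]) : muP p (pball n y) = muP p (pball n x) := by
  have h : pball n y = (fun w => (x - y) + w) ⁻¹' (pball n x) := by
    ext w
    simp only [Set.mem_preimage, mem_pball]
    have : x - y + w - x = w - y := by ring
    rw [this]
  rw [h, measure_preimage_add]

lemma pball_int_disjoint (n : ℕ) {i j : ℕ} (hi : i < p ^ n) (hj : j < p ^ n) (hne : i ≠ j) :
    Disjoint (pball n ((i : ℤ_[p]))) (pball n ((j : ℤ_[p]))) := by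
  rw [Set.disjoint_iff_inter_eq_empty]
  by_contra h
  obtain ⟨z, hz1, hz2⟩ := Set.nonempty_iff_ne_empty.mpr h
  rw [mem_pball] at hz1 hz2
  have hij : ‖((i : ℤ_[p])) - ((j : ℤ_[p]))‖ ≤ (p : ℝ) ^ (-(n : ℤ)) := by
    refine (norm_sub_trans _ z _).trans (max_le ?_ hz2)
    rwa [norm_sub_rev]
  have hcast : ((i : ℤ_[p])) - ((j : ℤ_[p])) = (((i : ℤ) - (j : ℤ) : ℤ) : ℤ_[p]) := by push_cast; ring
  rw [hcast, PadicInt.norm_int_le_pow_iff_dvd] at hij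
  have hi' : (i : ℤ) < (p : ℤ) ^ n := by exact_mod_cast hi
  have hj' : (j : ℤ) < (p : ℤ) ^ n := by exact_mod_cast hj
  have habs : |(i : ℤ) - (j : ℤ)| < (p : ℤ) ^ n := by
    rw [abs_lt]; omega
  have := Int.eq_zero_of_abs_lt_dvd (by exact_mod_cast hij) habs
  omega

lemma pball_int_cover (n : ℕ) :
    Set.univ ⊆ ⋃ j ∈ Finset.range (p ^ n), pball n ((j : ℤ_[p])) := by
  intro x _
  refine Set.mem_biUnion (Finset.mem_range.mpr (PadicInt.appr_lt x n)) ?_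
  rw [mem_pball, PadicInt.norm_le_pow_iff_mem_span_pow]
  exact PadicInt.appr_spec n x

lemma sum_pball_int (n : ℕ) :
    ∑ j ∈ Finset.range (p ^ n), muP p (pball n ((j : ℤ_[p]))) = 1 := by
  rw [← measure_biUnion_finset ?_ (fun j _ => measurableSet_pball n _)]
  · rw [← muP_univ (p := p)]
    apply le_antisymm (measure_mono (Set.subset_univ _)) (measure_mono (pball_int_cover n))
  · intro i hi j hj hne
    exact pball_int_disjoint n (Finset.mem_range.mp hi) (Finset.mem_range.mp hj) hne

/-- Density lemma: a positive measure set has cosets of arbitrarily high density. -/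
lemma exists_dense_pball (A : Set ℤ_[p]) (hA : MeasurableSet A) (hApos : 0 < muP p A)
    {r : ℝ≥0∞} (hr : r < 1) :
    ∃ n x, r * muP p (pball n x) < muP p (A ∩ pball n x) := by
  classical
  by_contra hcon
  push_neg at hcon
  have hAfin : muP p A ≠ ∞ := by
    refine ne_top_of_le_ne_top ?_ (measure_mono (Set.subset_univ A))
    rw [muP_univ]; exact one_ne_top
  have hrA : r * muP p A < muP p A := by
    calc r * muP p A < 1 * muP p A := by
          rw [mul_comm r, mul_comm 1]; exact ENNReal.mul_lt_mul_right hApos.ne' hAfin hr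
      _ = muP p A := one_mul _
  obtain ⟨ε, hε0, hεlt⟩ := ENNReal.lt_iff_exists_add_pos_lt.mp hrA
  obtain ⟨U, hAU, hUopen, hU⟩ := A.exists_isOpen_lt_add hAfin
    (ε := (ε : ℝ≥0∞)) (by exact_mod_cast hε0.ne')
  -- for each x ∈ U there is a ball around x inside U
  have hex : ∀ x ∈ U, ∃ n, pball n x ⊆ U := by
    intro x hx
    obtain ⟨δ, hδ0, hδ⟩ := Metric.isOpen_iff.mp hUopen x hx
    obtain ⟨n, hn⟩ := PadicInt.exists_pow_neg_lt p hδ0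
    exact ⟨n, (Metric.closedBall_subset_ball hn).trans hδ⟩
  set N : ℤ_[p] → ℕ := fun x => if h : ∃ n, pball n x ⊆ U then Nat.find h else 0 with hNdef
  have hNsub : ∀ x ∈ U, pball (N x) x ⊆ U := by
    intro x hx
    rw [hNdef]
    simp only [hex x hx, dif_pos]
    exact Nat.find_spec (hex x hx)
  have hNmin : ∀ x ∈ U, ∀ m, pball m x ⊆ U → N x ≤ m := by
    intro x hx m hm
    rw [hNdef]
    simp only [hex x hx, dif_pos]
    exact Nat.find_le hm
  set S : Set (Set ℤ_[p]) := (fun x => pball (N x) x) '' U with hSdef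
  have hScount : S.Countable := by
    refine Set.Countable.mono ?_
      (Set.countable_range (fun q : ℕ × ℕ => pball q.1 ((q.2 : ℤ_[p]))))
    rintro s ⟨x, hx, rfl⟩
    refine ⟨(N x, PadicInt.appr x (N x)), ?_⟩
    apply pball_eq_of_mem
    rw [mem_pball]
    rw [norm_sub_rev, PadicInt.norm_le_pow_iff_mem_span_pow]
    exact PadicInt.appr_spec (N x) x
  have key : ∀ x ∈ U, ∀ y ∈ U, N x ≤ N y →
      (pball (N x) x ∩ pball (N y) y).Nonempty → pball (N x) x = pball (N y) y := by
    intro x hx y hy hle ⟨z, hzx, hzy⟩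
    have hzy' : z ∈ pball (N x) y := pball_mono hle y hzy
    have h1 : pball (N x) y = pball (N x) x := by
      rw [← pball_eq_of_mem hzy', ← pball_eq_of_mem hzx]
    have hysub : pball (N x) y ⊆ U := by rw [h1]; exact hNsub x hx
    have : N y = N x := le_antisymm (hNmin y hy _ hysub) hle
    rw [this, h1]
  have hSdisj : S.Pairwise Disjoint := by
    rintro s ⟨x, hx, rfl⟩ t ⟨y, hy, rfl⟩ hst
    rw [Set.disjoint_iff_inter_eq_empty]
    by_contra h
    have hne := Set.nonempty_iff_ne_empty.mpr h
    rcases le_total (N x) (N y) with hle | hle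
    · exact hst (key x hx y hy hle hne)
    · exact hst ((key y hy x hx hle ⟨hne.choose, hne.choose_spec.2, hne.choose_spec.1⟩).symm)
  have hSmeas : ∀ s ∈ S, MeasurableSet s := by
    rintro s ⟨x, hx, rfl⟩
    exact measurableSet_pball _ _
  have hUnion : ⋃₀ S = U := by
    apply Set.Subset.antisymm
    · rintro w ⟨s, ⟨x, hx, rfl⟩, hw⟩
      exact hNsub x hx hw
    · intro x hx
      exact ⟨pball (N x) x, ⟨x, hx, rfl⟩, mem_pball_self _ _⟩
  -- the contradiction
  have hA_eq : muP p A = ∑' s : S, muP p (A ∩ (s : Set ℤ_[p])) := by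
    have hrepr : A = ⋃ s ∈ S, A ∩ s := by
      ext w
      simp only [Set.mem_iUnion, Set.mem_inter_iff, exists_prop]
      constructor
      · intro hw
        obtain ⟨s, hs, hws⟩ : w ∈ ⋃₀ S := hUnion ▸ hAU hw
        exact ⟨s, hs, hw, hws⟩
      · rintro ⟨s, -, hw, -⟩; exact hw
    conv_lhs => rw [hrepr]
    exact measure_biUnion hScount
      (fun s hs t ht hst => (hSdisj hs ht hst).mono Set.inter_subset_right Set.inter_subset_right)
      (fun s hs => hA.inter (hSmeas s hs))
  have hbound : muP p A ≤ r * muP p U := by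
    rw [hA_eq]
    have hsum : muP p U = ∑' s : S, muP p (s : Set ℤ_[p]) := by
      rw [← hUnion]; exact measure_sUnion hScount hSdisj hSmeas
    calc ∑' s : S, muP p (A ∩ (s : Set ℤ_[p]))
        ≤ ∑' s : S, r * muP p (s : Set ℤ_[p]) := by
          refine ENNReal.tsum_le_tsum ?_
          rintro ⟨s, ⟨x, hx, rfl⟩⟩
          exact hcon (N x) x
      _ = r * ∑' s : S, muP p (s : Set ℤ_[p]) := ENNReal.tsum_mul_left
      _ = r * muP p U := by rw [← hsum]
  have : muP p A < muP p A := by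
    calc muP p A ≤ r * muP p U := hbound
      _ ≤ r * (muP p A + ε) := mul_le_mul_right hU.le r
      _ = r * muP p A + r * ε := mul_add _ _ _
      _ ≤ r * muP p A + 1 * ε := add_le_add_right (mul_le_mul_left hr.le ε) _
      _ = r * muP p A + ε := by rw [one_mul]
      _ < muP p A := hεlt
  exact absurd this (lt_irrefl _)

end Stmt16

theorem statement16 (p₁ p₂ : ℕ) [Fact p₁.Prime] [Fact p₂.Prime] (hne : p₁ ≠ p₂)
    (k : ℕ) (hk : 0 < k) (A : Set ℤ_[p₂]) (hA : MeasurableSet A) (hApos : 0 < muP p₂ A) :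
    ∀ ε > (0 : ℝ), ∃ c > (0 : ℝ),
      1 - ENNReal.ofReal ε ≤
        muP p₂ {α : ℤ_[p₂] | ∃ α' ∈ A, ∃ z : ℤ,
          (p₁ : ℤ) ^ k ∣ z ∧ |(z : ℝ)| < c ∧ α = α' + (z : ℤ_[p₂])} := by
  intro ε hε
  set r : ℝ≥0∞ := 1 - ENNReal.ofReal ε with hrdef
  have hr : r < 1 :=
    ENNReal.sub_lt_self ENNReal.one_ne_top one_ne_zero (ENNReal.ofReal_pos.mpr hε).ne'
  obtain ⟨n, x, hden⟩ := Stmt16.exists_dense_pball A hA hApos hr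
  -- coprimality and the translating integers
  have hcop : IsCoprime ((p₁ : ℤ) ^ k) ((p₂ : ℤ) ^ n) := by
    have h : Nat.Coprime (p₁ ^ k) (p₂ ^ n) :=
      Nat.Coprime.pow _ _ ((Nat.coprime_primes (Fact.out : p₁.Prime) (Fact.out : p₂.Prime)).mpr hne)
    exact_mod_cast h.isCoprime
  obtain ⟨u, v, huv⟩ := hcop
  set a : ℤ := (PadicInt.appr x n : ℤ) with hadef
  set z : ℕ → ℤ := fun j => ((j : ℤ) - a) * u * (p₁ : ℤ) ^ k with hzdef
  set c : ℝ := (∑ j ∈ Finset.range (p₂ ^ n), |((z j : ℤ) : ℝ)|) + 1 with hcdef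
  have hcpos : 0 < c := by
    rw [hcdef]
    positivity
  refine ⟨c, hcpos, ?_⟩
  set T : Set ℤ_[p₂] := {α : ℤ_[p₂] | ∃ α' ∈ A, ∃ zz : ℤ,
      (p₁ : ℤ) ^ k ∣ zz ∧ |(zz : ℝ)| < c ∧ α = α' + (zz : ℤ_[p₂])} with hTdef
  -- the translated copies of A ∩ pball n x
  set s : ℕ → Set ℤ_[p₂] :=
    fun j => (fun α => α - ((z j : ℤ) : ℤ_[p₂])) ⁻¹' (A ∩ Stmt16.pball n x) with hsdef
  have hzdvd : ∀ j, (p₁ : ℤ) ^ k ∣ z j := fun j => ⟨((j : ℤ) - a) * u, by simp only [hzdef]; ring⟩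
  have hzcong : ∀ j, ((p₂ : ℤ) ^ n) ∣ (z j - ((j : ℤ) - a)) := by
    intro j
    refine ⟨-(((j : ℤ) - a) * v), ?_⟩
    simp only [hzdef]
    linear_combination ((j : ℤ) - a) * huv
  have hzlt : ∀ j ∈ Finset.range (p₂ ^ n), |((z j : ℤ) : ℝ)| < c := by
    intro j hj
    rw [hcdef]
    have h1 : |((z j : ℤ) : ℝ)| ≤ ∑ i ∈ Finset.range (p₂ ^ n), |((z i : ℤ) : ℝ)| :=
      Finset.single_le_sum (f := fun i => |((z i : ℤ) : ℝ)|) (fun i _ => abs_nonneg _) hj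
    linarith
  have hsT : ∀ j ∈ Finset.range (p₂ ^ n), s j ⊆ T := by
    intro j hj α hα
    obtain ⟨hαA, -⟩ := hα
    exact ⟨α - ((z j : ℤ) : ℤ_[p₂]), hαA, z j, hzdvd j, hzlt j hj, (sub_add_cancel α _).symm⟩
  have hxa : ‖x - (a : ℤ_[p₂])‖ ≤ (p₂ : ℝ) ^ (-(n : ℤ)) := by
    rw [PadicInt.norm_le_pow_iff_mem_span_pow]
    rw [hadef]
    push_cast
    exact PadicInt.appr_spec n x
  have hsball : ∀ j, s j ⊆ Stmt16.pball n ((j : ℤ_[p₂])) := by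
    intro j α hα
    obtain ⟨-, hαball⟩ := hα
    rw [Stmt16.mem_pball] at hαball ⊢
    have keyz : ‖((z j : ℤ) : ℤ_[p₂]) + x - ((j : ℕ) : ℤ_[p₂])‖ ≤ (p₂ : ℝ) ^ (-(n : ℤ)) := by
      have hsplit : ((z j : ℤ) : ℤ_[p₂]) + x - ((j : ℕ) : ℤ_[p₂]) =
          (((z j - ((j : ℤ) - a) : ℤ)) : ℤ_[p₂]) + (x - (a : ℤ_[p₂])) := by
        push_cast
        ring
      rw [hsplit]
      refine (PadicInt.nonarchimedean _ _).trans (max_le ?_ hxa)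
      rw [PadicInt.norm_int_le_pow_iff_dvd]
      exact_mod_cast hzcong j
    have hsplit2 : α - ((j : ℕ) : ℤ_[p₂]) =
        ((α - ((z j : ℤ) : ℤ_[p₂])) - x) + (((z j : ℤ) : ℤ_[p₂]) + x - ((j : ℕ) : ℤ_[p₂])) := by
      ring
    rw [hsplit2]
    exact (PadicInt.nonarchimedean _ _).trans (max_le hαball keyz)
  have hsmeas : ∀ j, MeasurableSet (s j) := by
    intro j
    exact (hA.inter (Stmt16.measurableSet_pball n x)).preimage
      ((continuous_id.sub continuous_const).measurable)
  have hsμ : ∀ j, muP p₂ (s j) = muP p₂ (A ∩ Stmt16.pball n x) := by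
    intro j
    have hset : s j = (fun α => -((z j : ℤ) : ℤ_[p₂]) + α) ⁻¹' (A ∩ Stmt16.pball n x) := by
      ext α
      simp only [hsdef, Set.mem_preimage, neg_add_eq_sub]
    rw [hset]
    exact measure_preimage_add _ _ _
  have hsdisj : (↑(Finset.range (p₂ ^ n)) : Set ℕ).PairwiseDisjoint s := by
    intro i hi j hj hij
    simp only [Finset.coe_range, Set.mem_Iio] at hi hj
    exact (Stmt16.pball_int_disjoint n hi hj hij).mono (hsball i) (hsball j)
  calc r = r * 1 := (mul_one r).symm
    _ = r * ∑ j ∈ Finset.range (p₂ ^ n), muP p₂ (Stmt16.pball n ((j : ℤ_[p₂]))) := by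
        rw [Stmt16.sum_pball_int]
    _ = ∑ j ∈ Finset.range (p₂ ^ n), r * muP p₂ (Stmt16.pball n ((j : ℤ_[p₂]))) := by
        rw [Finset.mul_sum]
    _ = ∑ j ∈ Finset.range (p₂ ^ n), r * muP p₂ (Stmt16.pball n x) := by
        refine Finset.sum_congr rfl fun j _ => ?_
        rw [Stmt16.muP_pball_eq n x ((j : ℤ_[p₂]))]
    _ ≤ ∑ j ∈ Finset.range (p₂ ^ n), muP p₂ (s j) := by
        refine Finset.sum_le_sum fun j _ => ?_
        rw [hsμ j]
        exact hden.le
    _ = muP p₂ (⋃ j ∈ Finset.range (p₂ ^ n), s j) :=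
        (measure_biUnion_finset hsdisj (fun j _ => hsmeas j)).symm
    _ ≤ muP p₂ T := by
        refine measure_mono ?_
        exact Set.iUnion₂_subset hsT
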